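/- Let f be a ℂ-affine map from Mₙ(ℂ) to itself which is an isometry for the operator norm and maps the closed unit ball into the closed unit ball. Then f(0) = 0; in particular f is linear. -/

import Mathlib

open Matrix
open scoped Matrix.Norms.L2Operator

/-- Corollary III.6 for `D₁ = D₂` the matrix ball: an affine isometry of `Mₙ(ℂ)`
(for the operator norm) mapping the closed unit ball into itself fixes the origin,
hence is linear. -/
theorem stmt5 (n : ℕ) (f : Matrix (Fin n) (Fin n) ℂ → Matrix (Fin n) (Fin n) ℂ)
    (ℓ : Matrix (Fin n) (Fin n) ℂ →ₗ[ℂ] Matrix (Fin n) (Fin n) ℂ)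
    (b : Matrix (Fin n) (Fin n) ℂ)
    (haff : ∀ x, f x = ℓ x + b)
    (hiso : Isometry f)
    (hball : ∀ x : Matrix (Fin n) (Fin n) ℂ, ‖x‖ ≤ 1 → ‖f x‖ ≤ 1) :
    f 0 = 0 := by
  have hnorm : ∀ z, ‖ℓ z‖ = ‖z‖ := by
    intro z
    have h := hiso.dist_eq z 0
    simpa [haff, dist_eq_norm, map_zero] using h
  by_contra h
  have hb : b ≠ 0 := by
    intro hb0
    apply h
    simp [haff, hb0]
  have hinj : Function.Injective ℓ := by
    intro x y hxy
    have h2 : ‖ℓ (x - y)‖ = ‖x - y‖ := hnorm _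
    rw [map_sub, hxy, sub_self, norm_zero] at h2
    exact sub_eq_zero.mp (norm_eq_zero.mp h2.symm)
  have hsurj : Function.Surjective ℓ :=
    (LinearMap.injective_iff_surjective).mp hinj
  obtain ⟨y, hy⟩ := hsurj (((‖b‖⁻¹ : ℝ) : ℂ) • b)
  have hbpos : (0:ℝ) < ‖b‖ := norm_pos_iff.mpr hb
  have hy1 : ‖y‖ ≤ 1 := by
    have h2 := hnorm y
    rw [hy, norm_smul] at h2
    rw [← h2]
    simp [Complex.norm_real, abs_of_nonneg (le_of_lt (inv_pos.mpr hbpos))]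
    rw [inv_mul_cancel₀ (ne_of_gt hbpos)]
  have hfy : ‖f y‖ = 1 + ‖b‖ := by
    rw [haff, hy]
    have heq : ((‖b‖⁻¹ : ℝ) : ℂ) • b + b = (((‖b‖⁻¹ + 1 : ℝ)) : ℂ) • b := by
      push_cast
      rw [add_smul, one_smul]
    rw [heq, norm_smul]
    rw [Complex.norm_real, Real.norm_eq_abs,
      abs_of_nonneg (by positivity : (0:ℝ) ≤ ‖b‖⁻¹ + 1)]
    field_simp
  have hle := hball y hy1
  rw [hfy] at hle
  linarith
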